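/- Let a ∈ k, let m, q, t be positive integers, and let f_{lj} ∈ k[x,y] for 1 ≤ l ≤ q, 1 ≤ j ≤ t. Suppose that the q rows of the scalar matrix [f_{lj}(a,a)] ∈ k^{q×t} are linearly independent over k. Then for all matrices N_1,…,N_q ∈ k^{m×m} there exist S_1,…,S_t ∈ k^{m×m} such that S_1^{f_{l1}} + ⋯ + S_t^{f_{lt}} = N_l for every l = 1,…,q, where the operation S ↦ S^f is taken with respect to L = R = J_m(a) (equivalently, λ = μ = a and F = G the nilpotent m×m Jordan block J_m(0)). -/
import Mathlib


open Matrix MvPolynomial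

noncomputable def matApply {k : Type*} [Field k] {m n : ℕ}
    (L : Matrix (Fin m) (Fin m) k) (R : Matrix (Fin n) (Fin n) k)
    (A : Matrix (Fin m) (Fin n) k) (f : MvPolynomial (Fin 2) k) :
    Matrix (Fin m) (Fin n) k :=
  ∑ d ∈ f.support, MvPolynomial.coeff d f • (L ^ (d 0) * A * R ^ (d 1))

/-- The `m×m` Jordan block with eigenvalue `a`. -/
def jordanBlock {k : Type*} [Field k] (m : ℕ) (a : k) : Matrix (Fin m) (Fin m) k :=
  Matrix.of fun i j => if (i : ℕ) = (j : ℕ) then a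
    else if (j : ℕ) = (i : ℕ) + 1 then 1 else 0

section Aux
variable {k : Type*} [Field k] {m : ℕ} (a : k)

lemma matApply_zeroA (L R : Matrix (Fin m) (Fin m) k) (f : MvPolynomial (Fin 2) k) :
    matApply L R (0 : Matrix (Fin m) (Fin m) k) f = 0 := by
  simp [matApply]

lemma matApply_subA (L R : Matrix (Fin m) (Fin m) k) (A B : Matrix (Fin m) (Fin m) k)
    (f : MvPolynomial (Fin 2) k) :
    matApply L R (A - B) f = matApply L R A f - matApply L R B f := by
  simp [matApply, Matrix.mul_sub, Matrix.sub_mul, smul_sub, Finset.sum_sub_distrib]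

lemma jordan_pow_lt (p : ℕ) : ∀ i j : Fin m, (j : ℕ) < (i : ℕ) →
    (jordanBlock m a ^ p) i j = 0 := by
  induction p with
  | zero =>
    intro i j h
    have : i ≠ j := by intro e; subst e; omega
    simp [Matrix.one_apply, this]
  | succ p ih =>
    intro i j h
    rw [pow_succ, Matrix.mul_apply]
    apply Finset.sum_eq_zero
    intro x _
    by_cases hx : (x : ℕ) < (i : ℕ)
    · rw [ih i x hx, zero_mul]
    · have h1 : (i : ℕ) ≠ (x : ℕ) ∨ True := Or.inr trivial
      have hj1 : (x : ℕ) ≠ (j : ℕ) := by omega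
      have hj2 : (j : ℕ) ≠ (x : ℕ) + 1 := by omega
      have : jordanBlock m a x j = 0 := by
        simp [jordanBlock, hj1, hj2]
      rw [this, mul_zero]

lemma jordan_pow_diag (p : ℕ) : ∀ i : Fin m, (jordanBlock m a ^ p) i i = a ^ p := by
  induction p with
  | zero => intro i; simp
  | succ p ih =>
    intro i
    rw [pow_succ, Matrix.mul_apply]
    rw [Finset.sum_eq_single i]
    · rw [ih i]
      simp [jordanBlock, pow_succ]
    · intro x _ hx
      by_cases hxi : (x : ℕ) < (i : ℕ)
      · rw [jordan_pow_lt a p i x hxi, zero_mul]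
      · have hne : (x : ℕ) ≠ (i : ℕ) := fun e => hx (Fin.ext e)
        have hj2 : (i : ℕ) ≠ (x : ℕ) + 1 := by omega
        have : jordanBlock m a x i = 0 := by simp [jordanBlock, hne, hj2]
        rw [this, mul_zero]
    · intro h; exact absurd (Finset.mem_univ i) h

lemma matApply_entry (e : ℤ) (f : MvPolynomial (Fin 2) k) (A : Matrix (Fin m) (Fin m) k)
    (hA : ∀ i j : Fin m, (j : ℤ) - (i : ℤ) < e → A i j = 0) :
    ∀ i j : Fin m, (j : ℤ) - (i : ℤ) < e + 1 →
      matApply (jordanBlock m a) (jordanBlock m a) A f i j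
        = MvPolynomial.eval ![a, a] f * A i j := by
  intro i j hij
  rw [matApply, Matrix.sum_apply]
  have key : ∀ d : Fin 2 →₀ ℕ,
      ((jordanBlock m a ^ (d 0) * A * jordanBlock m a ^ (d 1)) i j)
        = a ^ (d 0) * A i j * a ^ (d 1) := by
    intro d
    rw [Matrix.mul_apply]
    rw [Finset.sum_eq_single j]
    · rw [Matrix.mul_apply, Finset.sum_eq_single i]
      · rw [jordan_pow_diag, jordan_pow_diag]
      · intro x _ hx
        by_cases hxi : (x : ℕ) < (i : ℕ)
        · rw [jordan_pow_lt a _ i x hxi, zero_mul]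
        · have : (j : ℤ) - (x : ℤ) < e := by
            have hne : (x : ℕ) ≠ (i : ℕ) := fun h => hx (Fin.ext h)
            omega
          rw [hA x j this, mul_zero]
      · intro h; exact absurd (Finset.mem_univ i) h
    · intro y _ hy
      by_cases hyj : (j : ℕ) < (y : ℕ)
      · rw [jordan_pow_lt a _ y j hyj, mul_zero]
      · have hne : (y : ℕ) ≠ (j : ℕ) := fun h => hy (Fin.ext h)
        have hy' : (y : ℕ) < (j : ℕ) := by omega
        have hz : (jordanBlock m a ^ (d 0) * A) i y = 0 := by
          rw [Matrix.mul_apply]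
          apply Finset.sum_eq_zero
          intro x _
          by_cases hxi : (x : ℕ) < (i : ℕ)
          · rw [jordan_pow_lt a _ i x hxi, zero_mul]
          · have : (y : ℤ) - (x : ℤ) < e := by omega
            rw [hA x y this, mul_zero]
        rw [hz, zero_mul]
    · intro h; exact absurd (Finset.mem_univ j) h
  calc (∑ d ∈ f.support,
          (MvPolynomial.coeff d f •
            (jordanBlock m a ^ (d 0) * A * jordanBlock m a ^ (d 1))) i j)
      = ∑ d ∈ f.support, MvPolynomial.coeff d f * (a ^ (d 0) * A i j * a ^ (d 1)) := by
        apply Finset.sum_congr rfl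
        intro d _
        rw [Matrix.smul_apply, key d, smul_eq_mul]
    _ = (∑ d ∈ f.support, MvPolynomial.coeff d f * (a ^ (d 0) * a ^ (d 1))) * A i j := by
        rw [Finset.sum_mul]; apply Finset.sum_congr rfl; intro d _; ring
    _ = MvPolynomial.eval ![a, a] f * A i j := by
        congr 1
        rw [MvPolynomial.eval_eq']
        apply Finset.sum_congr rfl
        intro d _
        rw [Fin.prod_univ_two]
        simp

end Aux

/-- If the `q` rows of the scalar matrix `[f_{lj}(a,a)]` are linearly independent
over `k`, then the system `S_1^{f_{l1}} + ⋯ + S_t^{f_{lt}} = N_l` (`l = 1,…,q`),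
taken with respect to `L = R = J_m(a)`, is solvable for all right-hand sides
`N_1,…,N_q ∈ k^{m×m}`. -/
theorem solvable_of_linearIndependent_rows {k : Type*} [Field k] [IsAlgClosed k]
    (a : k) (m q t : ℕ) (hm : 0 < m) (hq : 0 < q) (ht : 0 < t)
    (f : Fin q → Fin t → MvPolynomial (Fin 2) k)
    (hli : LinearIndependent k
      (fun l : Fin q => fun j : Fin t => MvPolynomial.eval ![a, a] (f l j))) :
    ∀ N : Fin q → Matrix (Fin m) (Fin m) k,
      ∃ S : Fin t → Matrix (Fin m) (Fin m) k,
        ∀ l : Fin q,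
          (∑ j : Fin t,
            matApply (jordanBlock m a) (jordanBlock m a) (S j) (f l j)) = N l := by
  set r : Fin q → (Fin t → k) := fun l j => MvPolynomial.eval ![a, a] (f l j) with hr
  let T : (Fin q → k) →ₗ[k] (Fin t → k) :=
    { toFun := fun v => ∑ l, v l • r l
      map_add' := by intro x y; simp [add_smul, Finset.sum_add_distrib]
      map_smul' := by intro c x; simp [smul_smul, Finset.smul_sum] }
  have hTker : LinearMap.ker T = ⊥ := by
    rw [LinearMap.ker_eq_bot']
    intro v hv
    funext l
    exact Fintype.linearIndependent_iff.mp hli v hv l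
  obtain ⟨g, hg⟩ := LinearMap.exists_leftInverse_of_injective T hTker
  set C : Fin t → Fin q → k := fun j => g (Pi.single j 1) with hCdef
  have hCr : ∀ l l' : Fin q, (∑ j, r l j * C j l') = if l = l' then 1 else 0 := by
    intro l l'
    have h1 : T (Pi.single l 1) = r l := by
      funext j
      show (∑ l'' : Fin q, (Pi.single l 1 : Fin q → k) l'' • r l'') j = r l j
      simp [Pi.single_apply, Finset.sum_apply, apply_ite (fun v : Fin t → k => v j)]
    have h2 : g (r l) = Pi.single l 1 := by
      rw [← h1]
      exact LinearMap.congr_fun hg (Pi.single l 1)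
    have h4 : g (r l) = ∑ j, r l j • C j := by
      conv_lhs => rw [← Finset.univ_sum_single (r l)]
      rw [map_sum]
      apply Finset.sum_congr rfl
      intro j _
      have : (Pi.single j (r l j) : Fin t → k) = r l j • (Pi.single j 1 : Fin t → k) := by
        rw [← Pi.single_smul, smul_eq_mul, mul_one]
      rw [this, _root_.map_smul]
    have h5 : (∑ j, r l j • C j) l' = ∑ j, r l j * C j l' := by
      simp [Finset.sum_apply]
    rw [← h5, ← h4, h2, Pi.single_apply]
    simp [eq_comm]
  set J := jordanBlock m a with hJ
  set Sol : (Fin q → Matrix (Fin m) (Fin m) k) → Fin t → Matrix (Fin m) (Fin m) k :=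
    fun M j => ∑ l', C j l' • M l' with hSol
  have hStep : ∀ (e : ℤ) (M : Fin q → Matrix (Fin m) (Fin m) k),
      (∀ l', ∀ i j : Fin m, (j : ℤ) - (i : ℤ) < e → M l' i j = 0) →
      ∀ l, ∀ i j : Fin m, (j : ℤ) - (i : ℤ) < e + 1 →
        (∑ j' : Fin t, matApply J J (Sol M j') (f l j')) i j = M l i j := by
    intro e M hM l i j hij
    rw [Matrix.sum_apply]
    have hsol : ∀ j' : Fin t, ∀ i j : Fin m, (j : ℤ) - (i : ℤ) < e → Sol M j' i j = 0 := by
      intro j' i j h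
      simp only [hSol, Matrix.sum_apply, Matrix.smul_apply]
      exact Finset.sum_eq_zero fun l' _ => by rw [hM l' i j h, smul_zero]
    have e1 : ∀ j' : Fin t, matApply J J (Sol M j') (f l j') i j
        = r l j' * Sol M j' i j :=
      fun j' => matApply_entry a e (f l j') (Sol M j') (hsol j') i j hij
    rw [Finset.sum_congr rfl fun j' _ => e1 j']
    have e2 : ∀ j' : Fin t, r l j' * Sol M j' i j
        = ∑ l', r l j' * C j' l' * M l' i j := by
      intro j'
      simp only [hSol, Matrix.sum_apply, Matrix.smul_apply, smul_eq_mul, Finset.mul_sum]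
      exact Finset.sum_congr rfl fun l' _ => by ring
    rw [Finset.sum_congr rfl fun j' _ => e2 j', Finset.sum_comm]
    have e3 : ∀ l' : Fin q, (∑ j' : Fin t, r l j' * C j' l' * M l' i j)
        = (if l = l' then 1 else 0) * M l' i j := by
      intro l'
      rw [← Finset.sum_mul, hCr l l']
    rw [Finset.sum_congr rfl fun l' _ => e3 l']
    simp
  have main : ∀ n : ℕ, ∀ N : Fin q → Matrix (Fin m) (Fin m) k,
      (∀ l, ∀ i j : Fin m, (j : ℤ) - (i : ℤ) < (m : ℤ) - (n : ℤ) → N l i j = 0) →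
      ∃ M, ∀ l, (∑ j' : Fin t, matApply J J (Sol M j') (f l j')) = N l := by
    intro n
    induction n with
    | zero =>
      intro N hN
      refine ⟨0, fun l => ?_⟩
      have hN0 : N l = 0 := by
        ext i j
        refine hN l i j ?_
        have := j.isLt
        push_cast
        omega
      rw [hN0]
      apply Finset.sum_eq_zero
      intro j' _
      have h0 : Sol (0 : Fin q → Matrix (Fin m) (Fin m) k) j' = 0 := by
        simp [hSol]
      rw [h0, matApply_zeroA]
    | succ n ih =>
      intro N hN
      set N' : Fin q → Matrix (Fin m) (Fin m) k :=
        fun l => (∑ j' : Fin t, matApply J J (Sol N j') (f l j')) - N l with hN'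
      have hN'e : ∀ l, ∀ i j : Fin m, (j : ℤ) - (i : ℤ) < (m : ℤ) - (n : ℤ) → N' l i j = 0 := by
        intro l i j h
        have hs := hStep ((m : ℤ) - ((n : ℤ) + 1)) N
          (fun l' i j hh => hN l' i j (by push_cast; push_cast at hh; omega)) l i j
          (by omega)
        simp only [hN', Matrix.sub_apply, hs, sub_self]
      obtain ⟨M', hM'⟩ := ih N' hN'e
      refine ⟨fun l => N l - M' l, fun l => ?_⟩
      have hsub : (∑ j' : Fin t, matApply J J (Sol (fun l => N l - M' l) j') (f l j'))
          = (∑ j' : Fin t, matApply J J (Sol N j') (f l j'))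
            - (∑ j' : Fin t, matApply J J (Sol M' j') (f l j')) := by
        rw [← Finset.sum_sub_distrib]
        apply Finset.sum_congr rfl
        intro j' _
        have : Sol (fun l => N l - M' l) j' = Sol N j' - Sol M' j' := by
          simp [hSol, smul_sub, Finset.sum_sub_distrib]
        rw [this, matApply_subA]
      rw [hsub, hM' l]
      simp [hN']
  intro N
  obtain ⟨M, hM⟩ := main (2 * m) N (fun l i j h => by
    have hi := i.isLt
    have hj := j.isLt
    push_cast at h
    omega)
  exact ⟨Sol M, hM⟩
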